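/- Let B = [B_T B_C] be an oriented incidence matrix of a connected graph (the null space of Bᵀ equals the span of the all-ones vector) with spanning-tree decomposition, cut-set matrix R, and diagonal real weight matrix W, and assume R·W·Rᵀ is invertible. Define X = (B_Tᴸ)ᵀ·(R·W·Rᵀ)⁻¹·B_Tᴸ, where B_Tᴸ = L_e(T)⁻¹·B_Tᵀ. Then (i) X = (B_Tᴸ)ᵀ·L_ess⁻¹·B_Tᵀ, where L_ess = L_e(T)·R·W·Rᵀ, and (ii) X is the Moore–Penrose pseudoinverse of the weighted Laplacian L = B·W·Bᵀ, i.e. L·X·L = L, X·L·X = X, (L·X)ᵀ = L·X, and (X·L)ᵀ = X·L. -/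

import Mathlib

open Matrix

/-- `B` is an oriented incidence matrix: every column has exactly one `1`,
exactly one `-1`, and zeros elsewhere. -/
def IsIncidenceMatrix {V E : Type*} (B : Matrix V E ℝ) : Prop :=
  ∀ e : E, ∃ i j : V, i ≠ j ∧ B i e = 1 ∧ B j e = -1 ∧
    ∀ k : V, k ≠ i → k ≠ j → B k e = 0

private lemma gram_isUnit {V T : Type*} [Fintype V] [Fintype T] [DecidableEq T]
    (BT : Matrix V T ℝ)
    (hInd : LinearIndependent ℝ (fun f : T => (fun v : V => BT v f))) :
    IsUnit (BTᵀ * BT).det := by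
  rw [← Matrix.isUnit_iff_isUnit_det, ← Matrix.mulVec_injective_iff_isUnit]
  intro x y hxy
  have h : ∀ z : T → ℝ, (BTᵀ * BT) *ᵥ z = 0 → z = 0 := by
    intro z hz
    have hBz : BT *ᵥ z = 0 := by
      have h2 : z ⬝ᵥ ((BTᵀ * BT) *ᵥ z) = (BT *ᵥ z) ⬝ᵥ (BT *ᵥ z) := by
        rw [← Matrix.mulVec_mulVec, Matrix.dotProduct_mulVec, Matrix.vecMul_transpose]
      rw [hz, dotProduct_zero] at h2
      exact (dotProduct_self_eq_zero (v := BT *ᵥ z)).mp h2.symm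
    have := Fintype.linearIndependent_iff.mp hInd z ?_
    · funext t; exact this t
    · funext v
      simpa [Matrix.mulVec, dotProduct, mul_comm] using congrFun hBz v
  exact sub_eq_zero.mp (h (x - y) (by rw [Matrix.mulVec_sub, hxy, sub_self]))

/-- for a connected graph with spanning-tree decomposition `B = [B_T  B_C]`,
cut-set matrix `R = [I  T]` and invertible `R·W·Rᵀ`, the matrix
`X = (B_Tᴸ)ᵀ·(R·W·Rᵀ)⁻¹·B_Tᴸ` equals `(B_Tᴸ)ᵀ·L_ess⁻¹·B_Tᵀ` and is the Moore–Penrose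
pseudoinverse of `L = B·W·Bᵀ`. -/
theorem laplacian_pseudoinverse_via_essential_edge_laplacian
    {V T C : Type*} [Fintype V] [Fintype T] [Fintype C]
    [DecidableEq V] [DecidableEq T] [DecidableEq C] [Nonempty V]
    (BT : Matrix V T ℝ) (BC : Matrix V C ℝ)
    (hInc : IsIncidenceMatrix (Matrix.fromCols BT BC))
    (hInd : LinearIndependent ℝ (fun f : T => (fun v : V => BT v f)))
    (hSpan : ∀ c : C, (fun v : V => BC v c) ∈
      Submodule.span ℝ (Set.range (fun f : T => (fun v : V => BT v f))))
    -- the graph is connected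
    (hConn : LinearMap.ker (Matrix.fromCols BT BC)ᵀ.mulVecLin =
      Submodule.span ℝ {(fun _ : V => (1 : ℝ))})
    (w : T ⊕ C → ℝ)
    -- `R·W·Rᵀ` is invertible
    (hRWR : IsUnit ((Matrix.fromCols (1 : Matrix T T ℝ) ((BTᵀ * BT)⁻¹ * BTᵀ * BC)) * Matrix.diagonal w *
      (Matrix.fromCols (1 : Matrix T T ℝ) ((BTᵀ * BT)⁻¹ * BTᵀ * BC))ᵀ).det) :
    -- abbreviations via `let`
    (((BTᵀ * BT)⁻¹ * BTᵀ)ᵀ *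
        ((Matrix.fromCols (1 : Matrix T T ℝ) ((BTᵀ * BT)⁻¹ * BTᵀ * BC)) * Matrix.diagonal w *
          (Matrix.fromCols (1 : Matrix T T ℝ) ((BTᵀ * BT)⁻¹ * BTᵀ * BC))ᵀ)⁻¹ *
        ((BTᵀ * BT)⁻¹ * BTᵀ) =
      ((BTᵀ * BT)⁻¹ * BTᵀ)ᵀ *
        ((BTᵀ * BT) *
          ((Matrix.fromCols (1 : Matrix T T ℝ) ((BTᵀ * BT)⁻¹ * BTᵀ * BC)) * Matrix.diagonal w *
            (Matrix.fromCols (1 : Matrix T T ℝ) ((BTᵀ * BT)⁻¹ * BTᵀ * BC))ᵀ))⁻¹ * BTᵀ) ∧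
    (let L := Matrix.fromCols BT BC * Matrix.diagonal w * (Matrix.fromCols BT BC)ᵀ;
     let X := ((BTᵀ * BT)⁻¹ * BTᵀ)ᵀ *
        ((Matrix.fromCols (1 : Matrix T T ℝ) ((BTᵀ * BT)⁻¹ * BTᵀ * BC)) * Matrix.diagonal w *
          (Matrix.fromCols (1 : Matrix T T ℝ) ((BTᵀ * BT)⁻¹ * BTᵀ * BC))ᵀ)⁻¹ *
        ((BTᵀ * BT)⁻¹ * BTᵀ);
     L * X * L = L ∧ X * L * X = X ∧ (L * X)ᵀ = L * X ∧ (X * L)ᵀ = X * L) := by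
  clear hInc hConn
  have hNdet : IsUnit (BTᵀ * BT).det := gram_isUnit BT hInd
  set N : Matrix T T ℝ := BTᵀ * BT with hN_def
  set Tm : Matrix T C ℝ := N⁻¹ * BTᵀ * BC with hTm_def
  set R : Matrix T (T ⊕ C) ℝ := Matrix.fromCols 1 Tm with hR_def
  set M : Matrix T T ℝ := R * Matrix.diagonal w * Rᵀ with hM_def
  -- basic facts
  have hNsymm : Nᵀ = N := by rw [hN_def, Matrix.transpose_mul, Matrix.transpose_transpose]
  have hNN : N * N⁻¹ = 1 := Matrix.mul_nonsing_inv _ hNdet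
  have hNN' : N⁻¹ * N = 1 := Matrix.nonsing_inv_mul _ hNdet
  have hMM : M * M⁻¹ = 1 := Matrix.mul_nonsing_inv _ hRWR
  have hMM' : M⁻¹ * M = 1 := Matrix.nonsing_inv_mul _ hRWR
  -- BC = BT * Tm
  have hBC : BT * Tm = BC := by
    have hXm : ∃ Xm : Matrix T C ℝ, BT * Xm = BC := by
      have hc : ∀ c : C, ∃ f : T → ℝ,
          (∑ t, f t • (fun v : V => BT v t)) = fun v : V => BC v c := by
        intro c
        exact (Submodule.mem_span_range_iff_exists_fun ℝ).mp (hSpan c)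
      refine ⟨Matrix.of fun t c => (hc c).choose t, ?_⟩
      ext v c
      have := congrFun (hc c).choose_spec v
      simp only [Finset.sum_apply, Pi.smul_apply, smul_eq_mul] at this
      simpa [Matrix.mul_apply, Matrix.of_apply, mul_comm] using this
    obtain ⟨Xm, hXm⟩ := hXm
    rw [hTm_def, ← hXm]
    simp only [Matrix.mul_assoc]
    rw [← Matrix.mul_assoc BTᵀ BT Xm, ← hN_def, ← Matrix.mul_assoc N⁻¹ N Xm, hNN',
      Matrix.one_mul]
  -- B = BT * R
  have hB : Matrix.fromCols BT BC = BT * R := by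
    rw [hR_def, Matrix.mul_fromCols, Matrix.mul_one, hBC]
  -- L = BT * (M * BTᵀ)
  have hL : Matrix.fromCols BT BC * Matrix.diagonal w * (Matrix.fromCols BT BC)ᵀ =
      BT * (M * BTᵀ) := by
    rw [hB, hM_def, Matrix.transpose_mul]
    simp only [Matrix.mul_assoc]
  -- X = BT * (N⁻¹ * (M⁻¹ * (N⁻¹ * BTᵀ)))
  have hTinv : (N⁻¹ * BTᵀ)ᵀ = BT * N⁻¹ := by
    rw [Matrix.transpose_mul, Matrix.transpose_transpose, Matrix.transpose_nonsing_inv, hNsymm]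
  have hX : (N⁻¹ * BTᵀ)ᵀ * M⁻¹ * (N⁻¹ * BTᵀ) = BT * (N⁻¹ * (M⁻¹ * (N⁻¹ * BTᵀ))) := by
    rw [hTinv]; simp only [Matrix.mul_assoc]
  -- cancellation lemmas
  have hGram : ∀ Y : Matrix T V ℝ, BTᵀ * (BT * Y) = N * Y := fun Y => by
    rw [← Matrix.mul_assoc, ← hN_def]
  have cN : ∀ Y : Matrix T V ℝ, N * (N⁻¹ * Y) = Y := fun Y => by
    rw [← Matrix.mul_assoc, hNN, Matrix.one_mul]
  have cN' : ∀ Y : Matrix T V ℝ, N⁻¹ * (N * Y) = Y := fun Y => by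
    rw [← Matrix.mul_assoc, hNN', Matrix.one_mul]
  have cM : ∀ Y : Matrix T V ℝ, M * (M⁻¹ * Y) = Y := fun Y => by
    rw [← Matrix.mul_assoc, hMM, Matrix.one_mul]
  have cM' : ∀ Y : Matrix T V ℝ, M⁻¹ * (M * Y) = Y := fun Y => by
    rw [← Matrix.mul_assoc, hMM', Matrix.one_mul]
  constructor
  · -- part (i)
    rw [Matrix.mul_inv_rev]
    simp only [Matrix.mul_assoc]
  · -- part (ii)
    dsimp only
    rw [hL, hX]
    have hLX : BT * (M * BTᵀ) * (BT * (N⁻¹ * (M⁻¹ * (N⁻¹ * BTᵀ)))) = BT * (N⁻¹ * BTᵀ) := by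
      simp only [Matrix.mul_assoc]
      rw [hGram, cN, cM]
    have hXL : BT * (N⁻¹ * (M⁻¹ * (N⁻¹ * BTᵀ))) * (BT * (M * BTᵀ)) =
        BT * (N⁻¹ * BTᵀ) := by
      simp only [Matrix.mul_assoc]
      rw [hGram (M * BTᵀ), cN' (M * BTᵀ), cM' BTᵀ]
    have hPsymm : (BT * (N⁻¹ * BTᵀ))ᵀ = BT * (N⁻¹ * BTᵀ) := by
      rw [Matrix.transpose_mul, Matrix.transpose_mul, Matrix.transpose_transpose,
        Matrix.transpose_nonsing_inv, hNsymm, Matrix.mul_assoc]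
    refine ⟨?_, ?_, ?_, ?_⟩
    · rw [hLX]
      simp only [Matrix.mul_assoc]
      rw [hGram (M * BTᵀ), cN' (M * BTᵀ)]
    · rw [hXL]
      simp only [Matrix.mul_assoc]
      rw [hGram, cN']
    · rw [hLX, hPsymm]
    · rw [hXL, hPsymm]
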